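/- For every integer m ≥ 1 and every real t ≥ T, one has |τ_m(t) − t| ≤ Σ_{j=1}^{m} (t + j) / ∏_{c=1}^{j} φ(t+c). -/

import Mathlib

open Filter

/-- `PhiNest s z n k` is the finite composition
`exp(s - n + exp(s - (n+1) + ⋯ + exp(s - (n+k) + z)⋯))`,
i.e. `Φ_{n, n+k}(s, z)` in the paper's notation. -/
noncomputable def PhiNest (s z : ℂ) : ℕ → ℕ → ℂ
  | n, 0 => Complex.exp (s - (n : ℂ) + z)
  | n, k + 1 => Complex.exp (s - (n : ℂ) + PhiNest s z (n + 1) k)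

/-- `PhiComp s z n m = Φ_{n,m}(s,z)`, the composition of
`z ↦ exp(s - j + z)` for `j = n, …, m` (for `n ≤ m`). -/
noncomputable def PhiComp (s z : ℂ) (n m : ℕ) : ℂ :=
  PhiNest s z n (m - n)

/-- `phiSeq m s = φ_m(s) = Φ_{1,m}(s,0) = exp(s-1+exp(s-2+⋯+exp(s-m)⋯))`. -/
noncomputable def phiSeq (m : ℕ) (s : ℂ) : ℂ :=
  PhiComp s 0 1 m

/-- The correction terms `τ_n` built from a real function `f` (the restriction
of `φ` to the real line): `τ_0 = 0`, `τ_{n+1}(t) = t + log(1 + τ_n(t+1)/f(t+1))`. -/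
noncomputable def tauSeq (f : ℝ → ℝ) : ℕ → ℝ → ℝ
  | 0 => fun _ => 0
  | n + 1 => fun t => t + Real.log (1 + tauSeq f n (t + 1) / f (t + 1))

/-- The bound sum in `range` form. -/
noncomputable def auxB (f : ℝ → ℝ) (n : ℕ) (t : ℝ) : ℝ :=
  ∑ j ∈ Finset.range n, (t + (j : ℝ) + 1) / ∏ c ∈ Finset.range (j + 1), f (t + (c : ℝ) + 1)

lemma auxB_succ (f : ℝ → ℝ) (n : ℕ) (t : ℝ) :
    auxB f (n + 1) t = (t + 1) / f (t + 1) + auxB f n (t + 1) / f (t + 1) := by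
  unfold auxB
  rw [Finset.sum_range_succ', Finset.sum_div]
  have h0 : (t + (0 : ℕ) + 1) / ∏ c ∈ Finset.range (0 + 1), f (t + (c : ℝ) + 1)
      = (t + 1) / f (t + 1) := by
    simp
  rw [h0, add_comm]
  congr 1
  apply Finset.sum_congr rfl
  intro i _
  have hp : ∏ c ∈ Finset.range (i + 1 + 1), f (t + (c : ℝ) + 1)
      = (∏ c ∈ Finset.range (i + 1), f (t + 1 + (c : ℝ) + 1)) * f (t + 1) := by
    rw [Finset.prod_range_succ']
    congr 1
    · apply Finset.prod_congr rfl
      intro c _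
      congr 1
      push_cast
      ring
    · norm_num
  rw [hp, ← div_div]
  congr 2
  push_cast
  ring

lemma tau_nonneg (f : ℝ → ℝ) (T : ℝ) (hT : 0 ≤ T)
    (hf : ∀ u : ℝ, T ≤ u → 0 < f u) :
    ∀ n : ℕ, ∀ t : ℝ, T ≤ t → 0 ≤ tauSeq f n t := by
  intro n
  induction n with
  | zero => intro t _; simp [tauSeq]
  | succ n ih =>
    intro t ht
    have h1 : T ≤ t + 1 := by linarith
    have hx : 0 ≤ tauSeq f n (t + 1) / f (t + 1) :=
      div_nonneg (ih _ h1) (hf _ h1).le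
    have hlog : 0 ≤ Real.log (1 + tauSeq f n (t + 1) / f (t + 1)) :=
      Real.log_nonneg (by linarith)
    have ht0 : 0 ≤ t := le_trans hT ht
    show 0 ≤ t + Real.log (1 + tauSeq f n (t + 1) / f (t + 1))
    linarith

lemma tau_le_auxB (f : ℝ → ℝ) (T : ℝ) (hT : 0 ≤ T)
    (hf : ∀ u : ℝ, T ≤ u → 1 < f u) :
    ∀ n : ℕ, ∀ t : ℝ, T ≤ t → tauSeq f n t ≤ t + auxB f n t := by
  have hfpos : ∀ u : ℝ, T ≤ u → 0 < f u := fun u hu => lt_trans one_pos (hf u hu)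
  intro n
  induction n with
  | zero =>
    intro t ht
    simp only [tauSeq, auxB, Finset.range_zero, Finset.sum_empty, add_zero]
    linarith
  | succ n ih =>
    intro t ht
    have h1 : T ≤ t + 1 := by linarith
    have hfp : 0 < f (t + 1) := hfpos _ h1
    have hτ0 : 0 ≤ tauSeq f n (t + 1) := tau_nonneg f T hT hfpos n _ h1
    set x := tauSeq f n (t + 1) / f (t + 1) with hxdef
    have hx : 0 ≤ x := div_nonneg hτ0 hfp.le
    have hlog : Real.log (1 + x) ≤ x := by
      have := Real.log_le_sub_one_of_pos (show (0:ℝ) < 1 + x by linarith)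
      linarith
    have hx2 : x ≤ (t + 1 + auxB f n (t + 1)) / f (t + 1) := by
      rw [hxdef]
      gcongr
      exact ih _ h1
    have heq : (t + 1 + auxB f n (t + 1)) / f (t + 1) = auxB f (n + 1) t := by
      rw [auxB_succ, add_div]
    show t + Real.log (1 + x) ≤ t + auxB f (n + 1) t
    have : Real.log (1 + x) ≤ auxB f (n + 1) t := by
      rw [← heq]; exact le_trans hlog hx2
    linarith

theorem tauSeq_distance_from_identity_bound (φ : ℂ → ℂ)
    (hlim : ∀ K : Set ℂ, IsCompact K →
      TendstoUniformlyOn (fun m s => phiSeq m s) φ atTop K)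
    (hfe : ∀ s : ℂ, Complex.exp (s + φ s) = φ (s + 1))
    (hreal : ∀ t : ℝ, (φ (t : ℂ)).im = 0)
    (hpos : ∀ t : ℝ, 0 < (φ (t : ℂ)).re)
    (hmono : StrictMono (fun t : ℝ => (φ (t : ℂ)).re))
    (htop : Tendsto (fun t : ℝ => (φ (t : ℂ)).re) atTop atTop)
    (T : ℝ) (hT : 0 ≤ T) (hT1 : ∀ t : ℝ, T ≤ t → 1 < (φ (t : ℂ)).re) :
    ∀ m : ℕ, 1 ≤ m → ∀ t : ℝ, T ≤ t →
      |tauSeq (fun u : ℝ => (φ (u : ℂ)).re) m t - t|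
      ≤ ∑ j ∈ Finset.Icc 1 m,
          (t + j) / ∏ c ∈ Finset.Icc 1 j, (φ ((t + c : ℝ) : ℂ)).re := by
  intro m hm t ht
  set f : ℝ → ℝ := fun u : ℝ => (φ (u : ℂ)).re with hfdef
  have hfpos : ∀ u : ℝ, T ≤ u → 0 < f u := fun u hu => lt_trans one_pos (hT1 u hu)
  -- lower bound : tauSeq f m t ≥ t for m ≥ 1
  obtain ⟨n, rfl⟩ : ∃ n, m = n + 1 := ⟨m - 1, (Nat.succ_pred_eq_of_pos hm).symm⟩
  have h1 : T ≤ t + 1 := by linarith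
  have hge : t ≤ tauSeq f (n + 1) t := by
    have hx : 0 ≤ tauSeq f n (t + 1) / f (t + 1) :=
      div_nonneg (tau_nonneg f T hT hfpos n _ h1) (hfpos _ h1).le
    have hlog : 0 ≤ Real.log (1 + tauSeq f n (t + 1) / f (t + 1)) :=
      Real.log_nonneg (by linarith)
    show t ≤ t + Real.log (1 + tauSeq f n (t + 1) / f (t + 1))
    linarith
  rw [abs_of_nonneg (by linarith)]
  have hle := tau_le_auxB f T hT hT1 (n + 1) t ht
  have hsum : auxB f (n + 1) t
      = ∑ j ∈ Finset.Icc 1 (n + 1), (t + j) / ∏ c ∈ Finset.Icc 1 j, f (t + c) := by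
    rw [show Finset.Icc 1 (n + 1) = Finset.Ico 1 (n + 2) from rfl, Finset.sum_Ico_eq_sum_range]
    unfold auxB
    apply Finset.sum_congr (by congr 1)
    intro i _
    have hp : ∏ c ∈ Finset.Icc 1 (1 + i), f (t + c)
        = ∏ c ∈ Finset.range (i + 1), f (t + (c : ℝ) + 1) := by
      rw [show Finset.Icc 1 (1 + i) = Finset.Ico 1 (1 + i + 1) from rfl,
        Finset.prod_Ico_eq_prod_range]
      apply Finset.prod_congr (by congr 1; omega)
      intro c _
      congr 1
      push_cast
      ring
    rw [hp]
    congr 1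
    push_cast
    ring
  rw [hsum] at hle
  linarith
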